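/- Highest-weight property of the twisted monodromy matrix (fundamental sites): let Ŝ_a(λ) = ∏_{n=1}^ℓ (λ+a_n)(−λ−ħρ+a_n) · S_a(λ) = Σ_{j,k} E_{jk} ⊗ Ŝ_{jk}(λ), and v⁺ = e₁ ⊗ ⋯ ⊗ e₁ ∈ (ℂ^N)^{⊗ℓ}. Define P_k(λ) = ∏_{n=1}^ℓ (λ + a_n − ħ δ_{k,1}) and σ_k(λ) = P_k(λ) P_{N+1−k}(−λ−ħρ). Then for all λ with 2λ + ħρ ≠ 0: (i) Ŝ_{jk}(λ) v⁺ = 0 for 1 ≤ k < j ≤ N; (ii) Ŝ_{kk}(λ) v⁺ = ζ_k σ_k(λ) v⁺ for 1 ≤ k ≤ (N+1)/2; (iii) Ŝ_{kk}(λ) v⁺ = (ζ_k/(2λ+ħρ)) [ (2λ + ħ(ρ − θε)) σ_k(λ) + θεħ σ_{N+1−k}(λ) ] v⁺ for N/2 + 1 ≤ k ≤ N. -/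

import Mathlib

open Matrix Finset

noncomputable section

/-- The permutation operator `P` exchanging the tensor factors `p` and `q`
of `(ℂ^N)^{⊗ I}`, realized on the index type `I → Fin N`. -/
def permOp (N : ℕ) {I : Type} [Fintype I] [DecidableEq I] (p q : I) :
    Matrix (I → Fin N) (I → Fin N) ℂ :=
  fun f g => if f = g ∘ ⇑(Equiv.swap p q) then 1 else 0

/-- The rational R-matrix `R(λ) = I - (ħ/λ) P` acting on the tensor factors
`p` and `q`. -/
def Rmat (N : ℕ) (hbar : ℂ) {I : Type} [Fintype I] [DecidableEq I] (p q : I)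
    (lam : ℂ) : Matrix (I → Fin N) (I → Fin N) ℂ :=
  1 - (hbar / lam) • permOp N p q

/-- The one-site operator acting as the `N × N` matrix `A` on the tensor
factor `p` and as the identity elsewhere. -/
def siteOp (N : ℕ) {I : Type} [Fintype I] [DecidableEq I] (p : I)
    (A : Matrix (Fin N) (Fin N) ℂ) : Matrix (I → Fin N) (I → Fin N) ℂ :=
  fun f g => if Function.update g p (f p) = f then A (f p) (g p) else 0

/-- Ordinary partial transposition in the tensor factor `p`. -/
def ptransp {N : ℕ} {I : Type} [Fintype I] [DecidableEq I] (p : I)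
    (M : Matrix (I → Fin N) (I → Fin N) ℂ) : Matrix (I → Fin N) (I → Fin N) ℂ :=
  fun f g => M (Function.update f p (g p)) (Function.update g p (f p))

/-- The generalized transposition `A ↦ V⁻¹ Aᵀ V` applied in the tensor
factor `p` only. -/
def gtransp {N : ℕ} {I : Type} [Fintype I] [DecidableEq I]
    (V : Matrix (Fin N) (Fin N) ℂ) (p : I)
    (M : Matrix (I → Fin N) (I → Fin N) ℂ) : Matrix (I → Fin N) (I → Fin N) ℂ :=
  siteOp N p V⁻¹ * ptransp p M * siteOp N p V

/-- The antidiagonal matrix with all antidiagonal entries `1` (the case `θ = 1`). -/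
def Vplus (N : ℕ) : Matrix (Fin N) (Fin N) ℂ :=
  fun i j => if (i : ℕ) + (j : ℕ) + 1 = N then 1 else 0

/-- For even `N`, the antidiagonal matrix `antidiag(1,…,1,−1,…,−1)` whose first
`N/2` antidiagonal entries are `1` and last `N/2` are `-1` (the case `θ = -1`). -/
def Vminus (N : ℕ) : Matrix (Fin N) (Fin N) ℂ :=
  fun i j => if (i : ℕ) + (j : ℕ) + 1 = N then (if 2 * (i : ℕ) < N then 1 else -1) else 0

/-- The monodromy matrix `T_a(λ) = L_{a1}(λ) ⋯ L_{aℓ}(λ)` acting on the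
auxiliary space (`Sum.inl ()`) tensored with `ℓ` quantum spaces, where
`L_{an}(λ) = I − ħ P_{an}/(λ + a_n)`. -/
def Tmono (N ℓ : ℕ) (hbar : ℂ) (a : Fin ℓ → ℂ) (lam : ℂ) :
    Matrix ((Unit ⊕ Fin ℓ) → Fin N) ((Unit ⊕ Fin ℓ) → Fin N) ℂ :=
  ((List.finRange ℓ).map
    (fun n => Rmat N hbar (Sum.inl () : Unit ⊕ Fin ℓ) (Sum.inr n) (lam + a n))).prod

/-- The twisted monodromy matrix `S_a(λ) = T_a(λ) K_a T_a^{t_a}(−λ−ħρ)`,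
with `K = diagonal ζ`. -/
def Smat (N ℓ : ℕ) (hbar ρ : ℂ) (a : Fin ℓ → ℂ) (V : Matrix (Fin N) (Fin N) ℂ)
    (ζ : Fin N → ℂ) (lam : ℂ) :
    Matrix ((Unit ⊕ Fin ℓ) → Fin N) ((Unit ⊕ Fin ℓ) → Fin N) ℂ :=
  Tmono N ℓ hbar a lam * siteOp N (Sum.inl ()) (Matrix.diagonal ζ) *
    gtransp V (Sum.inl ()) (Tmono N ℓ hbar a (-lam - hbar * ρ))

/-- Partial trace over the auxiliary tensor factor. -/
def ptrAux (N ℓ : ℕ)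
    (M : Matrix ((Unit ⊕ Fin ℓ) → Fin N) ((Unit ⊕ Fin ℓ) → Fin N) ℂ) :
    Matrix (Fin ℓ → Fin N) (Fin ℓ → Fin N) ℂ :=
  fun f g => ∑ i : Fin N, M (Sum.elim (fun _ => i) f) (Sum.elim (fun _ => i) g)

/-- The transfer matrix `s(λ) = tr_a S_a(λ)`. -/
def transfer (N ℓ : ℕ) (hbar ρ : ℂ) (a : Fin ℓ → ℂ) (V : Matrix (Fin N) (Fin N) ℂ)
    (ζ : Fin N → ℂ) (lam : ℂ) : Matrix (Fin ℓ → Fin N) (Fin ℓ → Fin N) ℂ :=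
  ptrAux N ℓ (Smat N ℓ hbar ρ a V ζ lam)

/-- The operator-valued `(i,j)` entry of a matrix on (auxiliary) ⊗ (ℂ^N)^{⊗ℓ}:
if `M = Σ E_{ij} ⊗ M_{ij}` then `entryOp N ℓ M i j = M_{ij}`. -/
def entryOp (N ℓ : ℕ)
    (M : Matrix ((Unit ⊕ Fin ℓ) → Fin N) ((Unit ⊕ Fin ℓ) → Fin N) ℂ) (i j : Fin N) :
    Matrix (Fin ℓ → Fin N) (Fin ℓ → Fin N) ℂ :=
  fun f g => M (Sum.elim (fun _ => i) f) (Sum.elim (fun _ => j) g)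

/-- The pseudo-vacuum (highest weight) vector `v⁺ = e₁ ⊗ ⋯ ⊗ e₁` of `(ℂ^N)^{⊗ℓ}`. -/
def vplus (N ℓ : ℕ) : (Fin ℓ → Fin N) → ℂ :=
  fun f => if ∀ m, (f m : ℕ) = 0 then 1 else 0

/-- The renormalized twisted monodromy matrix
`Ŝ(λ) = ∏ₙ (λ+aₙ)(−λ−ħρ+aₙ) · S(λ)`. -/
def Shat (N ℓ : ℕ) (hbar ρ : ℂ) (a : Fin ℓ → ℂ) (V : Matrix (Fin N) (Fin N) ℂ)
    (ζ : Fin N → ℂ) (lam : ℂ) :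
    Matrix ((Unit ⊕ Fin ℓ) → Fin N) ((Unit ⊕ Fin ℓ) → Fin N) ℂ :=
  (∏ n : Fin ℓ, (lam + a n) * (-lam - hbar * ρ + a n)) • Smat N ℓ hbar ρ a V ζ lam

/-- The Drinfeld polynomial for the fundamental weights `α = (1, 0, …, 0)`:
`P_k(λ) = ∏ₙ (λ + aₙ − ħ δ_{k,1})`. -/
def Pfun (N ℓ : ℕ) (hbar : ℂ) (a : Fin ℓ → ℂ) (k : Fin N) (lam : ℂ) : ℂ :=
  ∏ n : Fin ℓ, (lam + a n - hbar * (if (k : ℕ) = 0 then 1 else 0))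

/-- `σ_k(λ) = P_k(λ) P_{k̄}(−λ−ħρ)` with `k̄ = N+1−k`. -/
def sigmafun (N ℓ : ℕ) (hbar ρ : ℂ) (a : Fin ℓ → ℂ) (k : Fin N) (lam : ℂ) : ℂ :=
  Pfun N ℓ hbar a k lam * Pfun N ℓ hbar a k.rev (-lam - hbar * ρ)

namespace Aux

variable {N ℓ : ℕ}

abbrev aI (ℓ : ℕ) : Unit ⊕ Fin ℓ := Sum.inl ()

/-- basis vector -/
def E (N ℓ : ℕ) (i : Fin N) (g : Fin ℓ → Fin N) : ((Unit ⊕ Fin ℓ) → Fin N) → ℂ :=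
  fun h => if h = Sum.elim (fun _ => i) g then 1 else 0

lemma eq_elim_iff {h : (Unit ⊕ Fin ℓ) → Fin N} {i : Fin N} {g : Fin ℓ → Fin N} :
    h = Sum.elim (fun _ => i) g ↔ h (aI ℓ) = i ∧ h ∘ Sum.inr = g := by
  constructor
  · rintro rfl; exact ⟨rfl, rfl⟩
  · rintro ⟨h1, h2⟩
    funext x
    cases x with
    | inl u => cases u; exact h1
    | inr m => exact congrFun h2 m

lemma E_apply (i : Fin N) (g : Fin ℓ → Fin N) (h : (Unit ⊕ Fin ℓ) → Fin N) :
    E N ℓ i g h = if h (aI ℓ) = i ∧ h ∘ Sum.inr = g then 1 else 0 := by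
  simp [E, eq_elim_iff]

lemma elim_aux (i : Fin N) (g : Fin ℓ → Fin N) :
    (Sum.elim (fun _ => i) g : (Unit ⊕ Fin ℓ) → Fin N) (aI ℓ) = i := rfl

lemma elim_inr (i : Fin N) (g : Fin ℓ → Fin N) :
    (Sum.elim (fun _ => i) g : (Unit ⊕ Fin ℓ) → Fin N) ∘ Sum.inr = g := rfl

lemma E_apply_elim (i j : Fin N) (g f : Fin ℓ → Fin N) :
    E N ℓ i g (Sum.elim (fun _ => j) f) = if j = i ∧ f = g then 1 else 0 := by
  rw [E_apply]; rfl

lemma mulVec_E (M : Matrix ((Unit ⊕ Fin ℓ) → Fin N) ((Unit ⊕ Fin ℓ) → Fin N) ℂ)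
    (i : Fin N) (g : Fin ℓ → Fin N) :
    M *ᵥ E N ℓ i g = fun h => M h (Sum.elim (fun _ => i) g) := by
  funext h
  simp [Matrix.mulVec, dotProduct, E]

lemma comp_swap_swap {α : Type} (p q : Unit ⊕ Fin ℓ) (g : (Unit ⊕ Fin ℓ) → α) :
    (g ∘ ⇑(Equiv.swap p q)) ∘ ⇑(Equiv.swap p q) = g := by
  funext x; simp

lemma permOp_mulVec (p q : Unit ⊕ Fin ℓ) (v : ((Unit ⊕ Fin ℓ) → Fin N) → ℂ) :
    permOp N p q *ᵥ v = fun h => v (h ∘ ⇑(Equiv.swap p q)) := by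
  funext h
  simp only [Matrix.mulVec, dotProduct, permOp]
  have step : ∀ g ∈ Finset.univ, (if h = g ∘ ⇑(Equiv.swap p q) then (1:ℂ) else 0) * v g
      = if g = h ∘ ⇑(Equiv.swap p q) then v g else 0 := by
    intro g _
    by_cases hg : g = h ∘ ⇑(Equiv.swap p q)
    · rw [if_pos hg, if_pos, one_mul]
      rw [hg, comp_swap_swap]
    · rw [if_neg hg, if_neg, zero_mul]
      intro he
      exact hg (by rw [he, comp_swap_swap])
  rw [Finset.sum_congr rfl step, Finset.sum_ite_eq' Finset.univ (h ∘ ⇑(Equiv.swap p q)) v,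
    if_pos (Finset.mem_univ _)]

lemma elim_comp_swap (i : Fin N) (g : Fin ℓ → Fin N) (n : Fin ℓ) :
    (Sum.elim (fun _ => i) g : (Unit ⊕ Fin ℓ) → Fin N) ∘ ⇑(Equiv.swap (aI ℓ) (Sum.inr n))
      = Sum.elim (fun _ => g n) (Function.update g n i) := by
  funext x
  cases x with
  | inl u =>
    cases u
    simp [Equiv.swap_apply_left, aI]
  | inr m =>
    by_cases hm : m = n
    · subst hm
      simp [Equiv.swap_apply_right, aI]
    · have : (Equiv.swap (aI ℓ) (Sum.inr n)) (Sum.inr m) = Sum.inr m := by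
        apply Equiv.swap_apply_of_ne_of_ne <;> simp [aI, hm]
      simp [this, Function.update_of_ne hm]

lemma permOp_mulVec_E (n : Fin ℓ) (i : Fin N) (g : Fin ℓ → Fin N) :
    permOp N (aI ℓ) (Sum.inr n) *ᵥ E N ℓ i g
      = E N ℓ (g n) (Function.update g n i) := by
  rw [permOp_mulVec]
  funext h
  simp only [E]
  refine if_congr ?_ rfl rfl
  constructor
  · intro he
    rw [← comp_swap_swap (aI ℓ) (Sum.inr n) h, he, elim_comp_swap]
  · intro he
    rw [he, ← elim_comp_swap]
    rw [comp_swap_swap]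

end Aux
namespace Aux2
open Aux
variable {N ℓ : ℕ}

def Lh (N ℓ : ℕ) (hb z : ℂ) (n : Fin ℓ) :
    Matrix ((Unit ⊕ Fin ℓ) → Fin N) ((Unit ⊕ Fin ℓ) → Fin N) ℂ :=
  z • (1 : Matrix ((Unit ⊕ Fin ℓ) → Fin N) ((Unit ⊕ Fin ℓ) → Fin N) ℂ)
    - hb • permOp N (aI ℓ) (Sum.inr n)

def Tp (N ℓ : ℕ) (hb : ℂ) (c : Fin ℓ → ℂ) (xs : List (Fin ℓ)) :
    Matrix ((Unit ⊕ Fin ℓ) → Fin N) ((Unit ⊕ Fin ℓ) → Fin N) ℂ :=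
  (xs.map (fun n => Lh N ℓ hb (c n) n)).prod

lemma Tp_nil (hb : ℂ) (c : Fin ℓ → ℂ) : Tp N ℓ hb c [] = 1 := rfl

lemma Tp_cons (hb : ℂ) (c : Fin ℓ → ℂ) (x : Fin ℓ) (xs : List (Fin ℓ)) :
    Tp N ℓ hb c (x :: xs) = Lh N ℓ hb (c x) x * Tp N ℓ hb c xs := by
  simp [Tp, List.prod_cons]

lemma Lh_mulVec_E (hb z : ℂ) (n : Fin ℓ) (i : Fin N) (g : Fin ℓ → Fin N) :
    Lh N ℓ hb z n *ᵥ E N ℓ i g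
      = z • E N ℓ i g - hb • E N ℓ (g n) (Function.update g n i) := by
  rw [Lh, Matrix.sub_mulVec, Matrix.smul_mulVec, Matrix.smul_mulVec,
    Matrix.one_mulVec, permOp_mulVec_E]

lemma Lh_mulVec_E_fix (hb z : ℂ) (n : Fin ℓ) (g : Fin ℓ → Fin N) [NeZero N]
    (hg : g n = 0) :
    Lh N ℓ hb z n *ᵥ E N ℓ 0 g = (z - hb) • E N ℓ 0 g := by
  rw [Lh_mulVec_E, hg]
  have : Function.update g n (0 : Fin N) = g := by
    funext m; by_cases hm : m = n
    · subst hm; rw [Function.update_self, hg]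
    · rw [Function.update_of_ne hm]
  rw [this, sub_smul]

lemma Tp_vac (hb : ℂ) (c : Fin ℓ → ℂ) (xs : List (Fin ℓ)) (g : Fin ℓ → Fin N) [NeZero N]
    (hg : ∀ n ∈ xs, g n = 0) :
    Tp N ℓ hb c xs *ᵥ E N ℓ 0 g = ((xs.map (fun n => c n - hb)).prod) • E N ℓ 0 g := by
  induction xs with
  | nil => simp [Tp_nil, Matrix.one_mulVec]
  | cons x xs ih =>
    rw [Tp_cons, ← Matrix.mulVec_mulVec, ih (fun n hn => hg n (List.mem_cons_of_mem x hn)),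
      Matrix.mulVec_smul, Lh_mulVec_E_fix hb (c x) x g (hg x List.mem_cons_self),
      List.map_cons, List.prod_cons, smul_smul, mul_comm]

end Aux2
set_option linter.unusedSectionVars false
namespace Aux3
open Aux Aux2
variable {N ℓ : ℕ}

def zf (N ℓ : ℕ) [NeZero N] : Fin ℓ → Fin N := fun _ => 0

def dl (N ℓ : ℕ) [NeZero N] (n : Fin ℓ) (j : Fin N) : Fin ℓ → Fin N :=
  Function.update (zf N ℓ) n j

variable [NeZero N]

lemma dl_apply_ne (n m : Fin ℓ) (j : Fin N) (h : m ≠ n) : dl N ℓ n j m = 0 :=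
  Function.update_of_ne h _ _

lemma dl_apply_self (n : Fin ℓ) (j : Fin N) : dl N ℓ n j n = j :=
  Function.update_self _ _ _

lemma update_dl_self (n : Fin ℓ) (j : Fin N) :
    Function.update (dl N ℓ n j) n (0 : Fin N) = zf N ℓ := by
  funext m
  by_cases hm : m = n
  · subst hm; rw [Function.update_self]; rfl
  · rw [Function.update_of_ne hm, dl_apply_ne _ _ _ hm]; rfl

lemma update_zf (n : Fin ℓ) (j : Fin N) :
    Function.update (zf N ℓ) n j = dl N ℓ n j := rfl

/-- coefficients: elements before `n` contribute `c m - hb`, after contribute `c m`. -/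
def cf (hb : ℂ) (c : Fin ℓ → ℂ) : List (Fin ℓ) → Fin ℓ → ℂ
  | [] => fun _ => 0
  | m :: xs => fun n => if n = m then (xs.map c).prod else (c m - hb) * cf hb c xs n

/-- coefficients: elements before `n` contribute `c m`, after contribute `c m - hb`. -/
def cf' (hb : ℂ) (c : Fin ℓ → ℂ) : List (Fin ℓ) → Fin ℓ → ℂ
  | [] => fun _ => 0
  | m :: xs => fun n =>
      if n = m then (xs.map (fun k => c k - hb)).prod else c m * cf' hb c xs n

def cf2 (hb : ℂ) (c : Fin ℓ → ℂ) : List (Fin ℓ) → Fin ℓ → Fin ℓ → ℂ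
  | [] => fun _ _ => 0
  | x :: xs => fun n m =>
      if x = n then 0 else if m = x then cf' hb c xs n else (c x - hb) * cf2 hb c xs n m

lemma mulVec_listSum {α : Type} (M : Matrix ((Unit ⊕ Fin ℓ) → Fin N) ((Unit ⊕ Fin ℓ) → Fin N) ℂ)
    (l : List α) (f : α → (((Unit ⊕ Fin ℓ) → Fin N) → ℂ)) :
    M *ᵥ (l.map f).sum = (l.map (fun x => M *ᵥ f x)).sum := by
  induction l with
  | nil => simp [Matrix.mulVec_zero]
  | cons x xs ih => simp [Matrix.mulVec_add, ih]

lemma listSum_apply {α : Type} (l : List α) (f : α → (((Unit ⊕ Fin ℓ) → Fin N) → ℂ))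
    (h : (Unit ⊕ Fin ℓ) → Fin N) :
    (l.map f).sum h = (l.map (fun x => f x h)).sum := by
  induction l with
  | nil => rfl
  | cons x xs ih => simp only [List.map_cons, List.sum_cons, Pi.add_apply, ih]

lemma Tp_col (hb : ℂ) (c : Fin ℓ → ℂ) (xs : List (Fin ℓ)) (hnd : xs.Nodup)
    (j : Fin N) (hj : j ≠ 0) :
    Tp N ℓ hb c xs *ᵥ E N ℓ j (zf N ℓ)
      = ((xs.map c).prod) • E N ℓ j (zf N ℓ)
        - hb • (xs.map (fun n => cf hb c xs n • E N ℓ 0 (dl N ℓ n j))).sum := by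
  induction xs with
  | nil => simp [Tp_nil, Matrix.one_mulVec, cf]
  | cons x xs ih =>
    have hx : x ∉ xs := (List.nodup_cons.mp hnd).1
    have hnd' : xs.Nodup := (List.nodup_cons.mp hnd).2
    rw [Tp_cons, ← Matrix.mulVec_mulVec, ih hnd', Matrix.mulVec_sub, Matrix.mulVec_smul,
      Matrix.mulVec_smul, mulVec_listSum, Lh_mulVec_E]
    have e1 : (fun n => Lh N ℓ hb (c x) x *ᵥ cf hb c xs n • E N ℓ 0 (dl N ℓ n j))
        = fun n => Lh N ℓ hb (c x) x *ᵥ cf hb c xs n • E N ℓ 0 (dl N ℓ n j) := rfl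
    have hmap : xs.map (fun n => Lh N ℓ hb (c x) x *ᵥ cf hb c xs n • E N ℓ 0 (dl N ℓ n j))
        = xs.map (fun n => (cf hb c (x :: xs) n) • E N ℓ 0 (dl N ℓ n j)) := by
      apply List.map_congr_left
      intro n hn
      have hnx : n ≠ x := fun he => hx (he ▸ hn)
      rw [Matrix.mulVec_smul, Lh_mulVec_E_fix hb (c x) x _ (dl_apply_ne n x j (Ne.symm hnx)),
        smul_smul, cf]
      simp only [cf, if_neg hnx]
      rw [mul_comm]
    rw [hmap]
    have hcfx : cf hb c (x :: xs) x = (xs.map c).prod := by simp [cf]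
    have hmap2 : xs.map (fun n => cf hb c (x :: xs) n • E N ℓ 0 (dl N ℓ n j))
        = xs.map (fun n => cf hb c (x :: xs) n • E N ℓ 0 (dl N ℓ n j)) := rfl
    show (xs.map c).prod • (c x • E N ℓ j (zf N ℓ)
          - hb • E N ℓ ((zf N ℓ) x) (Function.update (zf N ℓ) x j))
        - hb • (xs.map (fun n => cf hb c (x :: xs) n • E N ℓ 0 (dl N ℓ n j))).sum
      = (((x :: xs).map c).prod) • E N ℓ j (zf N ℓ)
        - hb • ((x :: xs).map (fun n => cf hb c (x :: xs) n • E N ℓ 0 (dl N ℓ n j))).sum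
    rw [update_zf]
    show (xs.map c).prod • (c x • E N ℓ j (zf N ℓ) - hb • E N ℓ 0 (dl N ℓ x j))
        - hb • (xs.map (fun n => cf hb c (x :: xs) n • E N ℓ 0 (dl N ℓ n j))).sum
      = _
    rw [List.map_cons, List.prod_cons, List.map_cons, List.sum_cons, hcfx]
    set e1' := E N ℓ j (zf N ℓ)
    set e2 := E N ℓ 0 (dl N ℓ x j)
    set S := (xs.map (fun n => cf hb c (x :: xs) n • E N ℓ 0 (dl N ℓ n j))).sum
    module

end Aux3
namespace Aux4
open Aux Aux2 Aux3
variable {N ℓ : ℕ} [NeZero N]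

lemma Lh_mulVec_Ej (hb z : ℂ) (x : Fin ℓ) (j : Fin N) :
    Lh N ℓ hb z x *ᵥ E N ℓ j (zf N ℓ)
      = z • E N ℓ j (zf N ℓ) - hb • E N ℓ 0 (dl N ℓ x j) := by
  rw [Lh_mulVec_E]; rfl

lemma Lh_mulVec_Edl (hb z : ℂ) (n : Fin ℓ) (j : Fin N) :
    Lh N ℓ hb z n *ᵥ E N ℓ 0 (dl N ℓ n j)
      = z • E N ℓ 0 (dl N ℓ n j) - hb • E N ℓ j (zf N ℓ) := by
  rw [Lh_mulVec_E, dl_apply_self, update_dl_self]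

lemma Tp_col2 (hb : ℂ) (c : Fin ℓ → ℂ) (xs : List (Fin ℓ)) (hnd : xs.Nodup)
    (j : Fin N) (n : Fin ℓ) (hn : n ∈ xs) :
    Tp N ℓ hb c xs *ᵥ E N ℓ 0 (dl N ℓ n j)
      = (c n * (((xs.erase n).map (fun k => c k - hb)).prod)) • E N ℓ 0 (dl N ℓ n j)
        - (hb * cf' hb c xs n) • E N ℓ j (zf N ℓ)
        + (hb * hb) • (xs.map (fun m => cf2 hb c xs n m • E N ℓ 0 (dl N ℓ m j))).sum := by
  induction xs with
  | nil => cases hn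
  | cons x xs ih =>
    have hx : x ∉ xs := (List.nodup_cons.mp hnd).1
    have hnd' : xs.Nodup := (List.nodup_cons.mp hnd).2
    by_cases hxn : x = n
    · subst hxn
      have hnxs : x ∉ xs := hx
      rw [Tp_cons, ← Matrix.mulVec_mulVec,
        Tp_vac hb c xs (dl N ℓ x j)
          (fun m hm => dl_apply_ne x m j (fun he => hnxs (he ▸ hm))),
        Matrix.mulVec_smul, Lh_mulVec_Edl]
      have h1 : (x :: xs).erase x = xs := by simp
      have h2 : cf' hb c (x :: xs) x = (xs.map (fun k => c k - hb)).prod := by simp [cf']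
      have h3 : ∀ m ∈ (x :: xs), cf2 hb c (x :: xs) x m • E N ℓ 0 (dl N ℓ m j) = 0 := by
        intro m _; simp [cf2]
      have h4 : ((x :: xs).map (fun m => cf2 hb c (x :: xs) x m • E N ℓ 0 (dl N ℓ m j))).sum
          = 0 := by
        apply List.sum_eq_zero
        intro y hy
        rcases List.mem_map.mp hy with ⟨m, hm, rfl⟩
        exact h3 m hm
      rw [h1, h2, h4]
      set e1 := E N ℓ 0 (dl N ℓ x j)
      set e2 := E N ℓ j (zf N ℓ)
      set p := (xs.map (fun k => c k - hb)).prod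
      module
    · have hnxs : n ∈ xs := by
        rcases List.mem_cons.mp hn with h | h
        · exact absurd h.symm hxn
        · exact h
      rw [Tp_cons, ← Matrix.mulVec_mulVec, ih hnd' hnxs, Matrix.mulVec_add,
        Matrix.mulVec_sub, Matrix.mulVec_smul, Matrix.mulVec_smul, Matrix.mulVec_smul,
        mulVec_listSum, Lh_mulVec_Ej,
        Lh_mulVec_E_fix hb (c x) x _ (dl_apply_ne n x j hxn)]
      have hmap : xs.map (fun m => Lh N ℓ hb (c x) x *ᵥ cf2 hb c xs n m • E N ℓ 0 (dl N ℓ m j))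
          = xs.map (fun m => ((c x - hb) * cf2 hb c xs n m) • E N ℓ 0 (dl N ℓ m j)) := by
        apply List.map_congr_left
        intro m hm
        have hmx : m ≠ x := fun he => hx (he ▸ hm)
        rw [Matrix.mulVec_smul, Lh_mulVec_E_fix hb (c x) x _ (dl_apply_ne m x j (Ne.symm hmx)),
          smul_smul, mul_comm]
      rw [hmap]
      have hA : ((x :: xs).erase n) = x :: xs.erase n := by
        rw [List.erase_cons_tail]
        simp [hxn]
      have hB : cf' hb c (x :: xs) n = c x * cf' hb c xs n := by
        simp [cf', Ne.symm hxn]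
      have hC : ((x :: xs).map (fun m => cf2 hb c (x :: xs) n m • E N ℓ 0 (dl N ℓ m j))).sum
          = cf' hb c xs n • E N ℓ 0 (dl N ℓ x j)
            + (xs.map (fun m => ((c x - hb) * cf2 hb c xs n m) • E N ℓ 0 (dl N ℓ m j))).sum := by
        rw [List.map_cons, List.sum_cons]
        congr 1
        · simp [cf2, hxn]
        · apply congrArg
          apply List.map_congr_left
          intro m hm
          have hmx : m ≠ x := fun he => hx (he ▸ hm)
          simp [cf2, hxn, hmx]
      rw [hA, hB, hC, List.map_cons, List.prod_cons]
      set e1 := E N ℓ 0 (dl N ℓ n j)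
      set e2 := E N ℓ j (zf N ℓ)
      set e3 := E N ℓ 0 (dl N ℓ x j)
      set S := (xs.map (fun m => ((c x - hb) * cf2 hb c xs n m) • E N ℓ 0 (dl N ℓ m j))).sum
      set p := ((xs.erase n).map (fun k => c k - hb)).prod
      set q := cf' hb c xs n
      module

end Aux4
namespace Aux5
open Aux Aux2 Aux3 Aux4
variable {N ℓ : ℕ} [NeZero N]

lemma Lh_mulVec_apply (hb z : ℂ) (x : Fin ℓ) (v : ((Unit ⊕ Fin ℓ) → Fin N) → ℂ)
    (h : (Unit ⊕ Fin ℓ) → Fin N) :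
    (Lh N ℓ hb z x *ᵥ v) h = z * v h - hb * v (h ∘ ⇑(Equiv.swap (aI ℓ) (Sum.inr x))) := by
  rw [Lh, Matrix.sub_mulVec, Matrix.smul_mulVec, Matrix.smul_mulVec,
    Matrix.one_mulVec, permOp_mulVec]
  simp [Pi.sub_apply, smul_eq_mul]

lemma Tp_avoid (hb : ℂ) (c : Fin ℓ → ℂ) (xs : List (Fin ℓ)) (b : Fin N)
    (v : ((Unit ⊕ Fin ℓ) → Fin N) → ℂ)
    (hv : ∀ h, (∃ x, h x = b) → v h = 0) :
    ∀ h, (∃ x, h x = b) → (Tp N ℓ hb c xs *ᵥ v) h = 0 := by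
  induction xs with
  | nil =>
    intro h hh
    rw [Tp_nil, Matrix.one_mulVec]
    exact hv h hh
  | cons x xs ih =>
    intro h hh
    rw [Tp_cons, ← Matrix.mulVec_mulVec, Lh_mulVec_apply]
    rcases hh with ⟨x₀, hx₀⟩
    rw [ih h ⟨x₀, hx₀⟩, ih _ ⟨(Equiv.swap (aI ℓ) (Sum.inr x)) x₀, by simp [hx₀]⟩]
    ring

lemma prod_map_mul (f g : Fin ℓ → ℂ) (xs : List (Fin ℓ)) :
    (xs.map (fun n => f n * g n)).prod = (xs.map f).prod * (xs.map g).prod := by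
  induction xs with
  | nil => simp
  | cons x xs ih => simp [ih]; ring

lemma sum_map_mul_left (k : ℂ) (f : Fin ℓ → ℂ) (xs : List (Fin ℓ)) :
    (xs.map (fun n => k * f n)).sum = k * (xs.map f).sum := by
  induction xs with
  | nil => simp
  | cons x xs ih => simp [ih]; ring

lemma sum_map_zero {α : Type} (l : List α) : (l.map (fun _ => (0:ℂ))).sum = 0 := by
  induction l with
  | nil => rfl
  | cons x xs ih => simp [ih]

lemma tele (hb d : ℂ) (u v : Fin ℓ → ℂ)
    (hd : ∀ n, u n * (v n - hb) - (u n - hb) * v n = d)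
    (xs : List (Fin ℓ)) (hnd : xs.Nodup) :
    d * (xs.map (fun n => cf hb v xs n * cf' hb u xs n)).sum
      = (xs.map (fun n => u n * (v n - hb))).prod
        - (xs.map (fun n => (u n - hb) * v n)).prod := by
  induction xs with
  | nil => simp [cf, cf']
  | cons x xs ih =>
    have hx : x ∉ xs := (List.nodup_cons.mp hnd).1
    have hnd' : xs.Nodup := (List.nodup_cons.mp hnd).2
    rw [List.map_cons, List.sum_cons]
    have h1 : cf hb v (x :: xs) x * cf' hb u (x :: xs) x
        = (xs.map v).prod * (xs.map (fun k => u k - hb)).prod := by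
      simp [cf, cf']
    have h2 : xs.map (fun n => cf hb v (x :: xs) n * cf' hb u (x :: xs) n)
        = xs.map (fun n => (u x * (v x - hb)) * (cf hb v xs n * cf' hb u xs n)) := by
      apply List.map_congr_left
      intro m hm
      have hmx : m ≠ x := fun he => hx (he ▸ hm)
      simp [cf, cf', hmx]
      ring
    rw [h1, h2, sum_map_mul_left, List.map_cons, List.prod_cons, List.map_cons,
      List.prod_cons]
    have h3 : (xs.map (fun n => (u n - hb) * v n)).prod
        = (xs.map (fun k => u k - hb)).prod * (xs.map v).prod := prod_map_mul _ _ _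
    have h4 := hd x
    linear_combination (u x * (v x - hb)) * ih hnd' - d * h3
      - ((xs.map (fun n => (u n - hb) * v n)).prod) * h4
end Aux5
namespace Aux6
open Aux Aux2 Aux3 Aux4 Aux5
variable {N ℓ : ℕ} [NeZero N]

lemma update_elim_aux (i c : Fin N) (g : Fin ℓ → Fin N) :
    Function.update (Sum.elim (fun _ => i) g : (Unit ⊕ Fin ℓ) → Fin N) (aI ℓ) c
      = Sum.elim (fun _ => c) g := by
  funext x
  cases x with
  | inl u => cases u; rw [Function.update_self]; rfl
  | inr m => rw [Function.update_of_ne (by simp [aI])]; rfl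

lemma update_aux (h : (Unit ⊕ Fin ℓ) → Fin N) (c : Fin N) :
    Function.update h (aI ℓ) c = Sum.elim (fun _ => c) (h ∘ Sum.inr) := by
  funext x
  cases x with
  | inl u => cases u; rw [Function.update_self]; rfl
  | inr m => rw [Function.update_of_ne (by simp [aI])]; rfl

lemma siteOp_mulVec_E (A : Matrix (Fin N) (Fin N) ℂ) (i : Fin N) (g : Fin ℓ → Fin N) :
    siteOp N (aI ℓ) A *ᵥ E N ℓ i g = ∑ c : Fin N, A c i • E N ℓ c g := by
  rw [mulVec_E]
  funext h
  simp only [siteOp, elim_aux, update_elim_aux, Finset.sum_apply, Pi.smul_apply, E_apply,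
    smul_eq_mul]
  rw [Finset.sum_eq_single (h (aI ℓ))]
  · by_cases hg : h ∘ Sum.inr = g
    · rw [if_pos, if_pos ⟨rfl, hg⟩, mul_one]
      exact (eq_elim_iff.mpr ⟨rfl, hg⟩).symm
    · rw [if_neg, if_neg (by tauto), mul_zero]
      intro he
      exact hg (eq_elim_iff.mp he.symm).2
  · intro c _ hc
    rw [if_neg (by tauto), mul_zero]
  · simp

lemma siteOp_diag_mulVec_E (ζ : Fin N → ℂ) (i : Fin N) (g : Fin ℓ → Fin N) :
    siteOp N (aI ℓ) (Matrix.diagonal ζ) *ᵥ E N ℓ i g = ζ i • E N ℓ i g := by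
  rw [siteOp_mulVec_E, Finset.sum_eq_single i]
  · rw [Matrix.diagonal_apply_eq]
  · intro c _ hc
    rw [Matrix.diagonal_apply_ne _ hc, zero_smul]
  · simp

omit [NeZero N] in
lemma rev_eq_iff (i j : Fin N) : i = j.rev ↔ (i : ℕ) + (j : ℕ) + 1 = N := by
  rw [Fin.ext_iff, Fin.val_rev]
  have := i.isLt
  have := j.isLt
  omega

lemma siteOp_anti_mulVec_E (V : Matrix (Fin N) (Fin N) ℂ)
    (hV1 : ∀ i j : Fin N, (i : ℕ) + (j : ℕ) + 1 ≠ N → V i j = 0)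
    (i : Fin N) (g : Fin ℓ → Fin N) :
    siteOp N (aI ℓ) V *ᵥ E N ℓ i g = V i.rev i • E N ℓ i.rev g := by
  rw [siteOp_mulVec_E, Finset.sum_eq_single i.rev]
  · intro c _ hc
    rw [hV1 c i (fun he => hc ((rev_eq_iff c i).mpr he)), zero_smul]
  · simp

lemma ptransp_mulVec_E (M : Matrix ((Unit ⊕ Fin ℓ) → Fin N) ((Unit ⊕ Fin ℓ) → Fin N) ℂ)
    (c : Fin N) (g : Fin ℓ → Fin N) :
    ptransp (aI ℓ) M *ᵥ E N ℓ c g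
      = fun h => M (Sum.elim (fun _ => c) (h ∘ Sum.inr)) (Sum.elim (fun _ => h (aI ℓ)) g) := by
  rw [mulVec_E]
  funext h
  show M (Function.update h (aI ℓ) ((Sum.elim (fun _ => c) g) (aI ℓ)))
      (Function.update (Sum.elim (fun _ => c) g) (aI ℓ) (h (aI ℓ))) = _
  rw [elim_aux, update_aux, update_elim_aux]

end Aux6
namespace Aux7
open Aux Aux2 Aux3 Aux4 Aux5 Aux6

variable {N : ℕ}

lemma vplus_entry (i j : Fin N) : Vplus N i j = if (i:ℕ) + (j:ℕ) + 1 = N then 1 else 0 := rfl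

lemma vminus_entry (i j : Fin N) :
    Vminus N i j = if (i:ℕ) + (j:ℕ) + 1 = N then (if 2*(i:ℕ) < N then 1 else -1) else 0 := rfl

lemma Vplus_mul_self (hN : 1 ≤ N) : Vplus N * Vplus N = 1 := by
  ext i k
  rw [Matrix.mul_apply, Finset.sum_eq_single i.rev]
  · have hrev : (i.rev : ℕ) = N - ((i:ℕ) + 1) := Fin.val_rev i
    have hi := i.isLt
    have hk := k.isLt
    have h1 : (i:ℕ) + (i.rev:ℕ) + 1 = N := by omega
    rw [vplus_entry, vplus_entry, if_pos h1, one_mul, Matrix.one_apply]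
    by_cases hik : i = k
    · subst hik
      rw [if_pos (by omega), if_pos rfl]
    · rw [if_neg (fun hc => hik (Fin.ext (by omega))), if_neg hik]
  · intro j _ hj
    rw [vplus_entry, if_neg, zero_mul]
    intro hc
    exact hj ((rev_eq_iff j i).mpr (by omega))
  · simp

lemma Vminus_mul_self (hNe : Even N) (hN : 1 ≤ N) : Vminus N * Vminus N = -1 := by
  obtain ⟨t, ht⟩ := hNe
  ext i k
  rw [Matrix.mul_apply, Finset.sum_eq_single i.rev]
  · have hrev : (i.rev : ℕ) = N - ((i:ℕ) + 1) := Fin.val_rev i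
    have hi := i.isLt
    have hk := k.isLt
    have h1 : (i:ℕ) + (i.rev:ℕ) + 1 = N := by omega
    rw [vminus_entry, vminus_entry, Matrix.neg_apply, Matrix.one_apply]
    by_cases hik : i = k
    · subst hik
      rw [if_pos h1, if_pos (show (i.rev:ℕ) + (i:ℕ) + 1 = N by omega), if_pos rfl]
      by_cases h2 : 2*(i:ℕ) < N
      · rw [if_pos h2, if_neg (by omega)]; ring
      · rw [if_neg h2, if_pos (by omega)]; ring
    · have h3 : ¬((i.rev:ℕ) + (k:ℕ) + 1 = N) := fun hc => hik (Fin.ext (by omega))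
      rw [if_pos h1, if_neg h3, mul_zero, if_neg hik, neg_zero]
  · intro j _ hj
    rw [vminus_entry, if_neg, zero_mul]
    intro hc
    exact hj ((rev_eq_iff j i).mpr (by omega))
  · simp

lemma Vplus_inv (hN : 1 ≤ N) : (Vplus N)⁻¹ = Vplus N :=
  Matrix.inv_eq_right_inv (Vplus_mul_self hN)

lemma Vminus_inv (hNe : Even N) (hN : 1 ≤ N) : (Vminus N)⁻¹ = -(Vminus N) := by
  apply Matrix.inv_eq_right_inv
  rw [Matrix.mul_neg, Vminus_mul_self hNe hN, neg_neg]

end Aux7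
namespace Aux7b
lemma Vplus_anti {N : ℕ} (i j : Fin N) (h : (i:ℕ) + (j:ℕ) + 1 = N) : Vplus N i j = 1 := by
  rw [Aux7.vplus_entry, if_pos h]

lemma Vminus_anti {N : ℕ} (i j : Fin N) (h : (i:ℕ) + (j:ℕ) + 1 = N) :
    Vminus N i j = if 2*(i:ℕ) < N then 1 else -1 := by
  rw [Aux7.vminus_entry, if_pos h]
end Aux7b
namespace Aux8
open Aux Aux2 Aux3 Aux4 Aux5 Aux6 Aux7
variable {N ℓ : ℕ} [NeZero N]

lemma sum_smulE_apply (l : List (Fin ℓ)) (c : Fin ℓ → ℂ) (p : Fin ℓ → Fin N)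
    (q : Fin ℓ → (Fin ℓ → Fin N)) (j : Fin N) (f : Fin ℓ → Fin N) :
    ((l.map (fun n => c n • E N ℓ (p n) (q n))).sum) (Sum.elim (fun _ => j) f)
      = (l.map (fun n => c n * (if j = p n ∧ f = q n then (1:ℂ) else 0))).sum := by
  rw [listSum_apply]
  congr 1
  apply List.map_congr_left
  intro n _
  simp only [Pi.smul_apply, smul_eq_mul, E_apply_elim]

lemma sum_smulE_apply_zero (l : List (Fin ℓ)) (c : Fin ℓ → ℂ) (p : Fin ℓ → Fin N)
    (q : Fin ℓ → (Fin ℓ → Fin N)) (j : Fin N) (f : Fin ℓ → Fin N)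
    (hz : ∀ n ∈ l, j ≠ p n ∨ c n = 0) :
    ((l.map (fun n => c n • E N ℓ (p n) (q n))).sum) (Sum.elim (fun _ => j) f) = 0 := by
  rw [sum_smulE_apply]
  apply List.sum_eq_zero
  intro y hy
  rcases List.mem_map.mp hy with ⟨n, hn, rfl⟩
  rcases hz n hn with h | h
  · rw [if_neg (fun hc => h hc.1), mul_zero]
  · rw [h, zero_mul]

lemma vac_apply (hb : ℂ) (cc : Fin ℓ → ℂ) (xs : List (Fin ℓ)) (g : Fin ℓ → Fin N)
    (hg : ∀ n ∈ xs, g n = 0) (j : Fin N) (f : Fin ℓ → Fin N) :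
    (Tp N ℓ hb cc xs *ᵥ E N ℓ 0 g) (Sum.elim (fun _ => j) f)
      = ((xs.map (fun n => cc n - hb)).prod) * (if j = 0 ∧ f = g then 1 else 0) := by
  rw [Tp_vac hb cc xs g hg]
  simp only [Pi.smul_apply, smul_eq_mul, E_apply_elim]

lemma Tpcol_apply (hb : ℂ) (cc : Fin ℓ → ℂ) (xs : List (Fin ℓ)) (hnd : xs.Nodup)
    (i : Fin N) (hi : i ≠ 0) (j : Fin N) (f : Fin ℓ → Fin N) :
    (Tp N ℓ hb cc xs *ᵥ E N ℓ i (zf N ℓ)) (Sum.elim (fun _ => j) f)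
      = ((xs.map cc).prod) * (if j = i ∧ f = zf N ℓ then 1 else 0)
        - hb * (xs.map (fun n =>
            cf hb cc xs n * (if j = 0 ∧ f = dl N ℓ n i then (1:ℂ) else 0))).sum := by
  rw [Tp_col hb cc xs hnd i hi]
  simp only [Pi.sub_apply, Pi.smul_apply, smul_eq_mul, E_apply_elim]
  rw [sum_smulE_apply]

lemma Tpcol_apply_ne0 (hb : ℂ) (cc : Fin ℓ → ℂ) (xs : List (Fin ℓ)) (hnd : xs.Nodup)
    (i : Fin N) (hi : i ≠ 0) (j : Fin N) (hj : j ≠ 0) (f : Fin ℓ → Fin N) :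
    (Tp N ℓ hb cc xs *ᵥ E N ℓ i (zf N ℓ)) (Sum.elim (fun _ => j) f)
      = ((xs.map cc).prod) * (if j = i ∧ f = zf N ℓ then 1 else 0) := by
  rw [Tp_col hb cc xs hnd i hi]
  simp only [Pi.sub_apply, Pi.smul_apply, smul_eq_mul, E_apply_elim]
  rw [sum_smulE_apply_zero _ _ _ _ _ _ (fun n _ => Or.inl hj), mul_zero, sub_zero]

lemma Tpcol2_apply (hb : ℂ) (cc : Fin ℓ → ℂ) (xs : List (Fin ℓ)) (hnd : xs.Nodup)
    (j : Fin N) (hj : j ≠ 0) (n : Fin ℓ) (hn : n ∈ xs) (f : Fin ℓ → Fin N) :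
    (Tp N ℓ hb cc xs *ᵥ E N ℓ 0 (dl N ℓ n j)) (Sum.elim (fun _ => j) f)
      = -(hb * cf' hb cc xs n) * (if f = zf N ℓ then 1 else 0) := by
  rw [Tp_col2 hb cc xs hnd j n hn]
  simp only [Pi.add_apply, Pi.sub_apply, Pi.smul_apply, smul_eq_mul, E_apply_elim]
  rw [sum_smulE_apply_zero _ _ _ _ _ _ (fun m _ => Or.inl hj), mul_zero, add_zero,
    if_neg (fun hc => hj hc.1), mul_zero, zero_sub]
  simp only [eq_self_iff_true, true_and]
  ring

lemma Pt1 (hb : ℂ) (cc : Fin ℓ → ℂ) (k : Fin N) (hk : k ≠ 0) :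
    ptransp (aI ℓ) (Tp N ℓ hb cc (List.finRange ℓ)) *ᵥ E N ℓ k (zf N ℓ)
      = (((List.finRange ℓ).map cc).prod) • E N ℓ k (zf N ℓ) := by
  rw [ptransp_mulVec_E]
  funext h
  have hcol : Tp N ℓ hb cc (List.finRange ℓ) (Sum.elim (fun _ => k) (h ∘ Sum.inr))
        (Sum.elim (fun _ => h (aI ℓ)) (zf N ℓ))
      = (Tp N ℓ hb cc (List.finRange ℓ) *ᵥ E N ℓ (h (aI ℓ)) (zf N ℓ))
          (Sum.elim (fun _ => k) (h ∘ Sum.inr)) := by rw [mulVec_E]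
  rw [hcol]
  by_cases hi : h (aI ℓ) = 0
  · rw [hi, vac_apply hb cc _ (zf N ℓ) (fun n _ => rfl) k _]
    simp only [Pi.smul_apply, smul_eq_mul, E_apply]
    rw [if_neg (fun hc => hk hc.1), if_neg (fun hc => hk (hc.1.symm.trans hi)), mul_zero,
      mul_zero]
  · rw [Tpcol_apply_ne0 hb cc _ (List.nodup_finRange ℓ) _ hi k hk]
    simp only [Pi.smul_apply, smul_eq_mul, E_apply]
    by_cases hik : h (aI ℓ) = k
    · by_cases hf : h ∘ Sum.inr = zf N ℓ
      · rw [if_pos ⟨hik.symm, hf⟩, if_pos ⟨hik, hf⟩]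
      · rw [if_neg (fun hc => hf hc.2), if_neg (fun hc => hf hc.2)]
    · rw [if_neg (fun hc => hik hc.1.symm), if_neg (fun hc => hik hc.1)]

lemma Pt0 (hb : ℂ) (cc : Fin ℓ → ℂ) :
    ptransp (aI ℓ) (Tp N ℓ hb cc (List.finRange ℓ)) *ᵥ E N ℓ 0 (zf N ℓ)
      = (((List.finRange ℓ).map (fun n => cc n - hb)).prod) • E N ℓ 0 (zf N ℓ)
        - hb • ∑ i : Fin N, ((List.finRange ℓ).map (fun n =>
            (if i = 0 then 0 else cf hb cc (List.finRange ℓ) n)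
              • E N ℓ i (dl N ℓ n i))).sum := by
  rw [ptransp_mulVec_E]
  funext h
  have hcol : Tp N ℓ hb cc (List.finRange ℓ) (Sum.elim (fun _ => (0:Fin N)) (h ∘ Sum.inr))
        (Sum.elim (fun _ => h (aI ℓ)) (zf N ℓ))
      = (Tp N ℓ hb cc (List.finRange ℓ) *ᵥ E N ℓ (h (aI ℓ)) (zf N ℓ))
          (Sum.elim (fun _ => (0:Fin N)) (h ∘ Sum.inr)) := by rw [mulVec_E]
  have hpt : h = Sum.elim (fun _ => h (aI ℓ)) (h ∘ Sum.inr) :=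
    eq_elim_iff.mpr ⟨rfl, rfl⟩
  rw [hcol]
  rw [show ((((List.finRange ℓ).map (fun n => cc n - hb)).prod) • E N ℓ 0 (zf N ℓ)
        - hb • ∑ i : Fin N, ((List.finRange ℓ).map (fun n =>
            (if i = 0 then 0 else cf hb cc (List.finRange ℓ) n)
              • E N ℓ i (dl N ℓ n i))).sum) h
      = (((List.finRange ℓ).map (fun n => cc n - hb)).prod)
          * (E N ℓ 0 (zf N ℓ) (Sum.elim (fun _ => h (aI ℓ)) (h ∘ Sum.inr)))
        - hb * ∑ i : Fin N, (((List.finRange ℓ).map (fun n =>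
            (if i = 0 then 0 else cf hb cc (List.finRange ℓ) n)
              • E N ℓ i (dl N ℓ n i))).sum) (Sum.elim (fun _ => h (aI ℓ)) (h ∘ Sum.inr))
      from by
        conv_lhs => rw [hpt]
        simp only [Pi.sub_apply, Pi.smul_apply, smul_eq_mul, Finset.sum_apply]]
  by_cases hi : h (aI ℓ) = 0
  · rw [hi, vac_apply hb cc _ (zf N ℓ) (fun n _ => rfl) 0 _]
    rw [E_apply_elim]
    rw [Finset.sum_eq_zero, mul_zero, sub_zero]
    intro i _
    apply sum_smulE_apply_zero
    intro n _
    by_cases hi0 : i = 0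
    · right; rw [if_pos hi0]
    · left; exact fun hc => hi0 hc.symm
  · rw [Tpcol_apply hb cc _ (List.nodup_finRange ℓ) _ hi 0 (h ∘ Sum.inr)]
    rw [E_apply_elim, if_neg (fun hc => hi hc.1.symm), mul_zero, zero_sub,
      if_neg (fun hc => hi hc.1), mul_zero, zero_sub]
    rw [Finset.sum_eq_single (h (aI ℓ))]
    · rw [sum_smulE_apply]
      refine congrArg (fun z => -(hb * z)) (congrArg List.sum ?_)
      apply List.map_congr_left
      intro n _
      rw [if_neg hi]
      simp only [eq_self_iff_true, true_and]
    · intro i _ hne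
      exact sum_smulE_apply_zero _ _ _ _ _ _ (fun n _ => Or.inl (Ne.symm hne))
    · intro habs
      exact absurd (Finset.mem_univ _) habs

end Aux8
namespace Aux9
open Aux Aux2 Aux3 Aux4 Aux5 Aux6 Aux7 Aux8
variable {N ℓ : ℕ} [NeZero N]

lemma mulVec_finsetSum {α : Type} (s : Finset α)
    (M : Matrix ((Unit ⊕ Fin ℓ) → Fin N) ((Unit ⊕ Fin ℓ) → Fin N) ℂ)
    (v : α → (((Unit ⊕ Fin ℓ) → Fin N) → ℂ)) :
    M *ᵥ (∑ x ∈ s, v x) = ∑ x ∈ s, M *ᵥ v x := by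
  classical
  induction s using Finset.induction with
  | empty => simp [Matrix.mulVec_zero]
  | insert _ _ hx ih => rw [Finset.sum_insert hx, Finset.sum_insert hx, Matrix.mulVec_add, ih]

lemma Gcol1 (hb : ℂ) (cc : Fin ℓ → ℂ) (V : Matrix (Fin N) (Fin N) ℂ)
    (hV1 : ∀ i j : Fin N, (i : ℕ) + (j : ℕ) + 1 ≠ N → V i j = 0)
    (hV1' : ∀ i j : Fin N, (i : ℕ) + (j : ℕ) + 1 ≠ N → V⁻¹ i j = 0)
    (k : Fin N) (hk : k.rev ≠ 0)
    (hs : V⁻¹ k k.rev * V k.rev k = 1) :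
    gtransp V (aI ℓ) (Tp N ℓ hb cc (List.finRange ℓ)) *ᵥ E N ℓ k (zf N ℓ)
      = (((List.finRange ℓ).map cc).prod) • E N ℓ k (zf N ℓ) := by
  rw [gtransp, ← Matrix.mulVec_mulVec, ← Matrix.mulVec_mulVec,
    siteOp_anti_mulVec_E V hV1, Matrix.mulVec_smul, Pt1 hb cc k.rev hk,
    Matrix.mulVec_smul, Matrix.mulVec_smul, siteOp_anti_mulVec_E V⁻¹ hV1', Fin.rev_rev,
    smul_smul, smul_smul]
  rw [show V k.rev k * ((List.finRange ℓ).map cc).prod * V⁻¹ k k.rev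
      = (V⁻¹ k k.rev * V k.rev k) * ((List.finRange ℓ).map cc).prod by ring, hs, one_mul]

lemma Gcol0 (hb : ℂ) (cc : Fin ℓ → ℂ) (V : Matrix (Fin N) (Fin N) ℂ)
    (hV1 : ∀ i j : Fin N, (i : ℕ) + (j : ℕ) + 1 ≠ N → V i j = 0)
    (hV1' : ∀ i j : Fin N, (i : ℕ) + (j : ℕ) + 1 ≠ N → V⁻¹ i j = 0)
    (k : Fin N) (hk : k.rev = 0) :
    gtransp V (aI ℓ) (Tp N ℓ hb cc (List.finRange ℓ)) *ᵥ E N ℓ k (zf N ℓ)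
      = (V k.rev k * (((List.finRange ℓ).map (fun n => cc n - hb)).prod
            * V⁻¹ (0:Fin N).rev 0)) • E N ℓ ((0:Fin N).rev) (zf N ℓ)
        - (V k.rev k * hb) • ∑ i : Fin N, ((List.finRange ℓ).map (fun n =>
            ((if i = 0 then 0 else cf hb cc (List.finRange ℓ) n) * V⁻¹ i.rev i)
              • E N ℓ i.rev (dl N ℓ n i))).sum := by
  rw [gtransp, ← Matrix.mulVec_mulVec, ← Matrix.mulVec_mulVec,
    siteOp_anti_mulVec_E V hV1, hk, Matrix.mulVec_smul, Pt0 hb cc,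
    Matrix.mulVec_smul]
  rw [Matrix.mulVec_sub, Matrix.mulVec_smul, Matrix.mulVec_smul,
    siteOp_anti_mulVec_E V⁻¹ hV1', mulVec_finsetSum]
  rw [smul_sub, smul_smul, smul_smul, smul_smul]
  congr 1
  · rw [mul_assoc]
  · congr 1
    apply Finset.sum_congr rfl
    intro i _
    rw [mulVec_listSum]
    apply congrArg List.sum
    apply List.map_congr_left
    intro n _
    rw [Matrix.mulVec_smul, siteOp_anti_mulVec_E V⁻¹ hV1', smul_smul]

end Aux9
namespace Aux10
open Aux Aux2 Aux3 Aux4 Aux5 Aux6 Aux7 Aux8 Aux9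
variable {N ℓ : ℕ} [NeZero N]

lemma smul_list_prod (c : Fin ℓ → ℂ)
    (M : Fin ℓ → Matrix ((Unit ⊕ Fin ℓ) → Fin N) ((Unit ⊕ Fin ℓ) → Fin N) ℂ) :
    ∀ xs : List (Fin ℓ),
      ((xs.map c).prod) • ((xs.map M).prod) = (xs.map (fun n => c n • M n)).prod := by
  intro xs
  induction xs with
  | nil => simp
  | cons x xs ih =>
    rw [List.map_cons, List.map_cons, List.map_cons, List.prod_cons, List.prod_cons,
      List.prod_cons, ← ih, mul_smul, Matrix.smul_mul, Matrix.mul_smul]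

lemma Lh_eq_smul_Rmat (hb z : ℂ) (hz : z ≠ 0) (n : Fin ℓ) :
    z • Rmat N hb (aI ℓ) (Sum.inr n) z = Lh N ℓ hb z n := by
  rw [Rmat, Lh, smul_sub, smul_smul, mul_comm z (hb / z), div_mul_cancel₀ _ hz]

lemma Tmono_smul (hb : ℂ) (a : Fin ℓ → ℂ) (lam : ℂ) (hpol : ∀ n : Fin ℓ, lam + a n ≠ 0) :
    (((List.finRange ℓ).map (fun n => lam + a n)).prod) • Tmono N ℓ hb a lam
      = Tp N ℓ hb (fun n => lam + a n) (List.finRange ℓ) := by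
  rw [Tmono, Tp, smul_list_prod]
  apply congrArg List.prod
  apply List.map_congr_left
  intro n _
  exact Lh_eq_smul_Rmat hb (lam + a n) (hpol n) n

lemma ptransp_smul (x : ℂ) (V : Matrix (Fin N) (Fin N) ℂ) (p : Unit ⊕ Fin ℓ)
    (M : Matrix ((Unit ⊕ Fin ℓ) → Fin N) ((Unit ⊕ Fin ℓ) → Fin N) ℂ) :
    ptransp p (x • M) = x • ptransp p M := by
  ext f g
  simp [ptransp, Matrix.smul_apply]

lemma gtransp_smul (x : ℂ) (V : Matrix (Fin N) (Fin N) ℂ) (p : Unit ⊕ Fin ℓ)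
    (M : Matrix ((Unit ⊕ Fin ℓ) → Fin N) ((Unit ⊕ Fin ℓ) → Fin N) ℂ) :
    gtransp V p (x • M) = x • gtransp V p M := by
  rw [gtransp, gtransp, ptransp_smul x V, Matrix.mul_smul, Matrix.smul_mul]

lemma Shat_eq (hbar ρ lam : ℂ) (a : Fin ℓ → ℂ) (ζ : Fin N → ℂ)
    (V : Matrix (Fin N) (Fin N) ℂ)
    (hpol : ∀ n : Fin ℓ, lam + a n ≠ 0 ∧ -lam - hbar * ρ + a n ≠ 0) :
    Shat N ℓ hbar ρ a V ζ lam
      = Tp N ℓ hbar (fun n => lam + a n) (List.finRange ℓ)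
          * siteOp N (aI ℓ) (Matrix.diagonal ζ)
          * gtransp V (aI ℓ)
              (Tp N ℓ hbar (fun n => -lam - hbar * ρ + a n) (List.finRange ℓ)) := by
  rw [Shat, Smat]
  rw [show (∏ n : Fin ℓ, (lam + a n) * (-lam - hbar * ρ + a n))
      = (((List.finRange ℓ).map (fun n => lam + a n)).prod)
        * (((List.finRange ℓ).map (fun n => -lam - hbar * ρ + a n)).prod) by
    rw [Finset.prod_mul_distrib, Fin.prod_univ_def, Fin.prod_univ_def]]
  rw [mul_smul, ← Matrix.mul_smul, ← Matrix.smul_mul, ← Matrix.smul_mul,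
    Tmono_smul hbar a lam (fun n => (hpol n).1), ← gtransp_smul,
    Tmono_smul hbar a (-lam - hbar * ρ) (fun n => (hpol n).2)]

lemma vplus_apply (g : Fin ℓ → Fin N) :
    vplus N ℓ g = if g = zf N ℓ then (1:ℂ) else 0 := by
  rw [vplus]
  refine if_congr ?_ rfl rfl
  constructor
  · intro hf; funext m; exact Fin.ext (hf m)
  · intro hf m; rw [hf]; rfl

lemma entry_extract (M : Matrix ((Unit ⊕ Fin ℓ) → Fin N) ((Unit ⊕ Fin ℓ) → Fin N) ℂ)
    (j k : Fin N) :
    (entryOp N ℓ M j k).mulVec (vplus N ℓ)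
      = fun f => (M *ᵥ E N ℓ k (zf N ℓ)) (Sum.elim (fun _ => j) f) := by
  funext f
  rw [mulVec_E]
  show ∑ g, entryOp N ℓ M j k f g * vplus N ℓ g = _
  rw [Finset.sum_eq_single (zf N ℓ)]
  · rw [vplus_apply, if_pos rfl, mul_one]; rfl
  · intro g _ hg
    rw [vplus_apply, if_neg hg, mul_zero]
  · simp

end Aux10
namespace Aux11
open Aux Aux2 Aux3 Aux4 Aux5 Aux6 Aux7 Aux8 Aux9 Aux10
variable {N ℓ : ℕ} [NeZero N]

lemma E_avoid (i : Fin N) (g : Fin ℓ → Fin N) (b : Fin N) (hi : i ≠ b)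
    (hg : ∀ m, g m ≠ b) :
    ∀ h : (Unit ⊕ Fin ℓ) → Fin N, (∃ x, h x = b) → E N ℓ i g h = 0 := by
  intro h ⟨x, hx⟩
  rw [E]
  rw [if_neg]
  intro he
  subst he
  cases x with
  | inl u => exact hi hx
  | inr m => exact hg m hx

lemma mainB (hb : ℂ) (μc νc : Fin ℓ → ℂ) (ζ : Fin N → ℂ)
    (V : Matrix (Fin N) (Fin N) ℂ)
    (hV1 : ∀ i j : Fin N, (i : ℕ) + (j : ℕ) + 1 ≠ N → V i j = 0)
    (hV1' : ∀ i j : Fin N, (i : ℕ) + (j : ℕ) + 1 ≠ N → V⁻¹ i j = 0)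
    (k : Fin N) (hk : k.rev = 0) (hk0 : k ≠ 0) (f : Fin ℓ → Fin N) :
    ((Tp N ℓ hb μc (List.finRange ℓ) * siteOp N (aI ℓ) (Matrix.diagonal ζ)
        * gtransp V (aI ℓ) (Tp N ℓ hb νc (List.finRange ℓ))) *ᵥ E N ℓ k (zf N ℓ))
      (Sum.elim (fun _ => k) f)
    = (V k.rev k * (((List.finRange ℓ).map (fun n => νc n - hb)).prod * V⁻¹ k 0)
          * (ζ k * ((List.finRange ℓ).map μc).prod)
        + V k.rev k * hb * hb * (V⁻¹ 0 k * ζ 0)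
          * (((List.finRange ℓ).map
              (fun n => cf hb νc (List.finRange ℓ) n
                * cf' hb μc (List.finRange ℓ) n)).sum))
      * (if f = zf N ℓ then 1 else 0) := by
  have h0rev : (0:Fin N).rev = k := by rw [← hk, Fin.rev_rev]
  rw [← Matrix.mulVec_mulVec, ← Matrix.mulVec_mulVec,
    Gcol0 hb νc V hV1 hV1' k hk, h0rev]
  rw [Matrix.mulVec_sub, Matrix.mulVec_sub, Matrix.mulVec_smul, Matrix.mulVec_smul,
    siteOp_diag_mulVec_E, Matrix.mulVec_smul, Matrix.mulVec_smul,
    mulVec_finsetSum, Matrix.mulVec_smul, mulVec_finsetSum]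
  simp only [Pi.sub_apply, Pi.smul_apply, smul_eq_mul, Finset.sum_apply]
  -- first term
  rw [Tpcol_apply_ne0 hb μc _ (List.nodup_finRange ℓ) k hk0 k hk0 f]
  rw [if_congr (and_iff_right rfl) rfl rfl]
  -- the i-sum collapses to i = k
  rw [Finset.sum_eq_single k]
  · -- i = k term
    rw [mulVec_listSum, mulVec_listSum]
    have hmap : (List.finRange ℓ).map (fun n =>
        Tp N ℓ hb μc (List.finRange ℓ) *ᵥ (siteOp N (aI ℓ) (Matrix.diagonal ζ) *ᵥ
          (((if k = 0 then 0 else cf hb νc (List.finRange ℓ) n) * V⁻¹ k.rev k)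
            • E N ℓ k.rev (dl N ℓ n k))))
        = (List.finRange ℓ).map (fun n =>
          ((cf hb νc (List.finRange ℓ) n * V⁻¹ k.rev k) * ζ k.rev)
            • (Tp N ℓ hb μc (List.finRange ℓ) *ᵥ E N ℓ k.rev (dl N ℓ n k))) := by
      apply List.map_congr_left
      intro n _
      rw [if_neg hk0, Matrix.mulVec_smul, siteOp_diag_mulVec_E, Matrix.mulVec_smul,
        Matrix.mulVec_smul, smul_smul]
    rw [hmap, listSum_apply]
    have hmap2 : (List.finRange ℓ).map (fun n =>
        (((cf hb νc (List.finRange ℓ) n * V⁻¹ k.rev k) * ζ k.rev)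
          • (Tp N ℓ hb μc (List.finRange ℓ) *ᵥ E N ℓ k.rev (dl N ℓ n k)))
            (Sum.elim (fun _ => k) f))
        = (List.finRange ℓ).map (fun n =>
          ((cf hb νc (List.finRange ℓ) n * V⁻¹ k.rev k) * ζ k.rev)
            * (-(hb * cf' hb μc (List.finRange ℓ) n)
                * (if f = zf N ℓ then 1 else 0))) := by
      apply List.map_congr_left
      intro n hn
      rw [Pi.smul_apply, smul_eq_mul, hk,
        Tpcol2_apply hb μc _ (List.nodup_finRange ℓ) k hk0 n hn f]
    rw [hmap2, hk]
    -- now pure scalar computation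
    by_cases hf : f = zf N ℓ
    · rw [if_pos hf]
      simp only [mul_one]
      have hsum : ((List.finRange ℓ).map (fun n =>
          cf hb νc (List.finRange ℓ) n * V⁻¹ 0 k * ζ 0
            * -(hb * cf' hb μc (List.finRange ℓ) n))).sum
          = (-(hb * (V⁻¹ 0 k * ζ 0))) * ((List.finRange ℓ).map
              (fun n => cf hb νc (List.finRange ℓ) n
                * cf' hb μc (List.finRange ℓ) n)).sum := by
        rw [← sum_map_mul_left]
        apply congrArg List.sum
        apply List.map_congr_left
        intro n _
        ring
      rw [hsum]
      ring
    · rw [if_neg hf]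
      simp only [mul_zero]
      rw [sum_map_zero]
      ring
  · -- i ≠ k terms vanish
    intro i _ hik
    rw [mulVec_listSum, mulVec_listSum, listSum_apply]
    apply List.sum_eq_zero
    intro y hy
    rcases List.mem_map.mp hy with ⟨n, _, rfl⟩
    by_cases hi0 : i = 0
    · subst hi0
      simp [Matrix.mulVec_zero]
    · rw [Matrix.mulVec_smul, siteOp_diag_mulVec_E, Matrix.mulVec_smul, Matrix.mulVec_smul,
        Pi.smul_apply, Pi.smul_apply, smul_eq_mul, smul_eq_mul]
      have havoid := Tp_avoid (N := N) (ℓ := ℓ) hb μc (List.finRange ℓ) k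
        (E N ℓ i.rev (dl N ℓ n i))
        (E_avoid i.rev (dl N ℓ n i) k
          (fun he => hi0 (by rw [← Fin.rev_rev i, he, hk]))
          (fun m => by
            by_cases hm : m = n
            · subst hm; rw [dl_apply_self]; exact hik
            · rw [dl_apply_ne n m _ hm]; exact Ne.symm hk0))
      rw [havoid (Sum.elim (fun _ => k) f) ⟨Sum.inl (), rfl⟩]
      ring
  · intro habs
    exact absurd (Finset.mem_univ _) habs

end Aux11
namespace Aux12
open Aux Aux2 Aux3 Aux4 Aux5 Aux6 Aux7 Aux8 Aux9 Aux10 Aux11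
variable {N ℓ : ℕ} [NeZero N]

lemma mainA (hb : ℂ) (μc νc : Fin ℓ → ℂ) (ζ : Fin N → ℂ)
    (V : Matrix (Fin N) (Fin N) ℂ)
    (hV1 : ∀ i j : Fin N, (i : ℕ) + (j : ℕ) + 1 ≠ N → V i j = 0)
    (hV1' : ∀ i j : Fin N, (i : ℕ) + (j : ℕ) + 1 ≠ N → V⁻¹ i j = 0)
    (k : Fin N) (hk : k.rev ≠ 0) (hs : V⁻¹ k k.rev * V k.rev k = 1) :
    (Tp N ℓ hb μc (List.finRange ℓ) * siteOp N (aI ℓ) (Matrix.diagonal ζ)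
        * gtransp V (aI ℓ) (Tp N ℓ hb νc (List.finRange ℓ))) *ᵥ E N ℓ k (zf N ℓ)
      = ((((List.finRange ℓ).map νc).prod) * ζ k)
          • (Tp N ℓ hb μc (List.finRange ℓ) *ᵥ E N ℓ k (zf N ℓ)) := by
  rw [← Matrix.mulVec_mulVec, ← Matrix.mulVec_mulVec,
    Gcol1 hb νc V hV1 hV1' k hk hs, Matrix.mulVec_smul, siteOp_diag_mulVec_E,
    Matrix.mulVec_smul, Matrix.mulVec_smul, smul_smul]

end Aux12

open Aux Aux2 Aux3 Aux4 Aux5 Aux6 Aux7 Aux7b Aux8 Aux9 Aux10 Aux11 Aux12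

/-- highest-weight property of the twisted monodromy matrix on
fundamental sites:
`Ŝ_{jk}(λ)v⁺ = 0` for `k < j`; `Ŝ_{kk}(λ)v⁺ = ζ_k σ_k(λ) v⁺` for `1 ≤ k ≤ (N+1)/2`;
and `Ŝ_{kk}(λ)v⁺ = (ζ_k/(2λ+ħρ))[(2λ+ħ(ρ−θε))σ_k(λ) + θεħ σ_{k̄}(λ)] v⁺`
for `N/2 + 1 ≤ k ≤ N`. -/
theorem twisted_monodromy_highest_weight (N ℓ : ℕ) (hN : 2 ≤ N) (hℓ : 1 ≤ ℓ)
    (hbar : ℂ) (hhbar : hbar ≠ 0) (ρ θ ε : ℂ)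
    (V : Matrix (Fin N) (Fin N) ℂ)
    (hV : (V = Vplus N ∧ θ = 1) ∨ (Even N ∧ V = Vminus N ∧ θ = -1))
    (hε : ε = 1 ∨ ε = -1)
    (ζ : Fin N → ℂ) (hζ0 : ∀ k, ζ k ≠ 0) (hζ : ∀ k : Fin N, ζ k.rev = ε * ζ k)
    (a : Fin ℓ → ℂ) (lam : ℂ) (hcr : 2 * lam + hbar * ρ ≠ 0)
    (hpol : ∀ n : Fin ℓ, lam + a n ≠ 0 ∧ -lam - hbar * ρ + a n ≠ 0) :
    (∀ j k : Fin N, (k : ℕ) < (j : ℕ) →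
        (entryOp N ℓ (Shat N ℓ hbar ρ a V ζ lam) j k).mulVec (vplus N ℓ) = 0) ∧
    (∀ k : Fin N, 2 * ((k : ℕ) + 1) ≤ N + 1 →
        (entryOp N ℓ (Shat N ℓ hbar ρ a V ζ lam) k k).mulVec (vplus N ℓ) =
          (ζ k * sigmafun N ℓ hbar ρ a k lam) • vplus N ℓ) ∧
    (∀ k : Fin N, N + 2 ≤ 2 * ((k : ℕ) + 1) →
        (entryOp N ℓ (Shat N ℓ hbar ρ a V ζ lam) k k).mulVec (vplus N ℓ) =
          (ζ k / (2 * lam + hbar * ρ) *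
            ((2 * lam + hbar * (ρ - θ * ε)) * sigmafun N ℓ hbar ρ a k lam +
              θ * ε * hbar * sigmafun N ℓ hbar ρ a k.rev lam)) • vplus N ℓ) := by
  haveI : NeZero N := ⟨by omega⟩
  have hnd := List.nodup_finRange ℓ
  have hθ2 : θ * θ = 1 := by
    rcases hV with ⟨_, h⟩ | ⟨_, _, h⟩ <;> rw [h] <;> ring
  have hV1 : ∀ i j : Fin N, (i:ℕ)+(j:ℕ)+1 ≠ N → V i j = 0 := by
    rcases hV with ⟨hVe, _⟩ | ⟨_, hVe, _⟩ <;> subst hVe <;> intro i j h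
    · rw [vplus_entry, if_neg h]
    · rw [vminus_entry, if_neg h]
  have hVinv : V⁻¹ = θ • V := by
    rcases hV with ⟨hVe, hθe⟩ | ⟨hNe, hVe, hθe⟩ <;> subst hVe <;> subst hθe
    · rw [Vplus_inv (by omega), one_smul]
    · rw [Vminus_inv hNe (by omega)]; ext i j; simp
  have hV1' : ∀ i j : Fin N, (i:ℕ)+(j:ℕ)+1 ≠ N → V⁻¹ i j = 0 := by
    intro i j h
    rw [hVinv, Matrix.smul_apply, hV1 i j h, smul_zero]
  have hV3 : ∀ i : Fin N, V i.rev i * V i i.rev = θ := by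
    intro i
    have hrev : (i.rev:ℕ) = N - ((i:ℕ)+1) := Fin.val_rev i
    have hi := i.isLt
    rcases hV with ⟨hVe, hθe⟩ | ⟨hNe, hVe, hθe⟩ <;> subst hVe <;> subst hθe
    · rw [Vplus_anti _ _ (by omega), Vplus_anti _ _ (by omega)]; ring
    · obtain ⟨t, ht⟩ := hNe
      rw [Vminus_anti _ _ (by omega), Vminus_anti _ _ (by omega)]
      by_cases h2 : 2*(i:ℕ) < N
      · rw [if_neg (by omega), if_pos h2]; ring
      · rw [if_pos (by omega), if_neg h2]; ring
  have hV0 : ∀ i j : Fin N, (i:ℕ) = 0 → (j:ℕ)+1 = N → V i j = 1 := by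
    intro i j h0 hj
    rcases hV with ⟨hVe, hθe⟩ | ⟨hNe, hVe, hθe⟩ <;> subst hVe
    · rw [Vplus_anti _ _ (by omega)]
    · rw [Vminus_anti _ _ (by omega), if_pos (by omega)]
  have hsV : ∀ kk : Fin N, V⁻¹ kk kk.rev * V kk.rev kk = 1 := by
    intro kk
    rw [hVinv, Matrix.smul_apply, smul_eq_mul,
      show θ * V kk kk.rev * V kk.rev kk = θ * (V kk.rev kk * V kk kk.rev) by ring,
      hV3, hθ2]
  have hPf0 : ∀ z : ℂ, Pfun N ℓ hbar a 0 z
      = ((List.finRange ℓ).map (fun n => z + a n - hbar)).prod := by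
    intro z
    rw [Pfun, Fin.prod_univ_def]
    apply congrArg List.prod
    apply List.map_congr_left
    intro n _
    norm_num
  have hPfne : ∀ (kk : Fin N), kk ≠ 0 → ∀ z : ℂ, Pfun N ℓ hbar a kk z
      = ((List.finRange ℓ).map (fun n => z + a n)).prod := by
    intro kk hkk z
    rw [Pfun, Fin.prod_univ_def]
    apply congrArg List.prod
    apply List.map_congr_left
    intro n _
    rw [if_neg (fun hc => hkk (Fin.ext (by rw [hc, Fin.val_zero]))), mul_zero, sub_zero]
  have hrevne : ∀ k : Fin N, (k:ℕ) < N - 1 → k.rev ≠ 0 := by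
    intro k hlt he
    have h1 : (k.rev:ℕ) = N - ((k:ℕ)+1) := Fin.val_rev k
    have h2 := congrArg Fin.val he
    rw [Fin.val_zero] at h2
    omega
  refine ⟨?_, ?_, ?_⟩
  · -- claim (i)
    intro j k hjk
    have hj := j.isLt
    have hj0 : j ≠ 0 := by
      intro h
      rw [h, Fin.val_zero] at hjk
      omega
    have hkrev : k.rev ≠ 0 := hrevne k (by omega)
    rw [entry_extract, Shat_eq hbar ρ lam a ζ V hpol]
    funext f
    rw [mainA hbar _ _ ζ V hV1 hV1' k hkrev (hsV k), Pi.smul_apply, smul_eq_mul]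
    by_cases hk0 : k = 0
    · subst hk0
      rw [vac_apply hbar _ _ (zf N ℓ) (fun n _ => rfl) j f,
        if_neg (fun hc => hj0 hc.1), mul_zero, mul_zero, Pi.zero_apply]
    · rw [Tpcol_apply_ne0 hbar _ _ hnd k hk0 j hj0 f,
        if_neg (fun hc => by rw [hc.1] at hjk; omega), mul_zero, mul_zero, Pi.zero_apply]
  · -- claim (ii)
    intro k hk2
    have hkv := k.isLt
    have hkrev : k.rev ≠ 0 := hrevne k (by omega)
    rw [entry_extract, Shat_eq hbar ρ lam a ζ V hpol]
    funext f
    rw [mainA hbar _ _ ζ V hV1 hV1' k hkrev (hsV k), Pi.smul_apply, smul_eq_mul,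
      Pi.smul_apply, smul_eq_mul, vplus_apply]
    rw [sigmafun]
    by_cases hk0 : k = 0
    · subst hk0
      rw [vac_apply hbar _ _ (zf N ℓ) (fun n _ => rfl) 0 f, hPf0 lam,
        hPfne _ hkrev (-lam - hbar * ρ)]
      simp only [eq_self_iff_true, true_and]
      ring
    · rw [Tpcol_apply_ne0 hbar _ _ hnd k hk0 k hk0 f, hPfne k hk0 lam,
        hPfne _ hkrev (-lam - hbar * ρ)]
      simp only [eq_self_iff_true, true_and]
      ring
  · -- claim (iii)
    intro k hk3
    have hkv := k.isLt
    have hk0 : k ≠ 0 := by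
      intro h
      rw [h, Fin.val_zero] at hk3
      omega
    by_cases hkrev : k.rev = 0
    · -- hard case k = last
      have hk1 : (k:ℕ) = N - 1 := by
        have h1 : (k.rev:ℕ) = N - ((k:ℕ)+1) := Fin.val_rev k
        have h2 := congrArg Fin.val hkrev
        rw [Fin.val_zero] at h2
        omega
      have hkrv : (k.rev:ℕ) = 0 := by rw [hkrev, Fin.val_zero]
      have hVk1 : V k.rev k = 1 := hV0 k.rev k hkrv (by omega)
      have hV0k : V 0 k = 1 := hV0 0 k (Fin.val_zero N) (by omega)
      have hVk0 : V k 0 = θ := by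
        have h3 := hV3 k
        rw [hkrev, hV0k, one_mul] at h3
        exact h3
      have hVinvk0 : V⁻¹ k 0 = 1 := by
        rw [hVinv, Matrix.smul_apply, smul_eq_mul, hVk0, hθ2]
      have hVinv0k : V⁻¹ 0 k = θ := by
        rw [hVinv, Matrix.smul_apply, smul_eq_mul, hV0k, mul_one]
      have hζ00 : ζ 0 = ε * ζ k := by
        have h4 := hζ k
        rw [hkrev] at h4
        exact h4
      have htele := tele hbar (-(hbar*(2*lam+hbar*ρ))) (fun n => lam + a n)
        (fun n => -lam - hbar * ρ + a n) (fun n => by ring) (List.finRange ℓ) hnd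
      rw [prod_map_mul (fun n => lam + a n) (fun n => -lam - hbar*ρ + a n - hbar),
        prod_map_mul (fun n => lam + a n - hbar) (fun n => -lam - hbar*ρ + a n)] at htele
      rw [entry_extract, Shat_eq hbar ρ lam a ζ V hpol]
      funext f
      rw [mainB hbar _ _ ζ V hV1 hV1' k hkrev hk0 f]
      rw [hVk1, hVinvk0, hVinv0k, hζ00]
      rw [Pi.smul_apply, smul_eq_mul, vplus_apply]
      rw [sigmafun, sigmafun, Fin.rev_rev, hPfne k hk0 lam, hPfne k hk0 (-lam - hbar*ρ),
        hkrev, hPf0 (-lam - hbar*ρ), hPf0 lam]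
      by_cases hf : f = zf N ℓ
      · rw [if_pos hf]
        simp only [mul_one]
        rw [div_mul_eq_mul_div, eq_div_iff hcr]
        linear_combination (-(hbar * θ * ε * ζ k)) * htele
      · rw [if_neg hf]
        simp only [mul_zero]
    · -- easy case
      have hkrv : k.rev ≠ 0 := hkrev
      rw [entry_extract, Shat_eq hbar ρ lam a ζ V hpol]
      funext f
      rw [mainA hbar _ _ ζ V hV1 hV1' k hkrv (hsV k), Pi.smul_apply, smul_eq_mul,
        Pi.smul_apply, smul_eq_mul, vplus_apply,
        Tpcol_apply_ne0 hbar _ _ hnd k hk0 k hk0 f]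
      rw [sigmafun, sigmafun, Fin.rev_rev, hPfne k hk0 lam, hPfne _ hkrv (-lam - hbar*ρ),
        hPfne _ hkrv lam, hPfne k hk0 (-lam - hbar*ρ)]
      simp only [eq_self_iff_true, true_and]
      by_cases hf : f = zf N ℓ
      · rw [if_pos hf]
        simp only [mul_one]
        rw [div_mul_eq_mul_div, eq_div_iff hcr]
        ring
      · rw [if_neg hf]
        simp only [mul_zero]
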